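/- arXiv:1711.02834 — 4 statements merged into one kernel-verified Lean document; each statement's English description precedes it below -/
import Mathlib

section
/- For any nonincreasing nonnegative sequence β(k) with ∑_{k=1}^∞ k·β(k) < ∞, the normalized double sum (1/t) ∑_{i=1}^{t} ∑_{j=t+1}^{2t} β(j−i) converges to 0 as t → ∞. -/
open Filter

/-- For a nonincreasing nonnegative sequence `β` with `∑ k·β k < ∞`, the normalized
double sum `(1/t) ∑_{i=1}^t ∑_{j=t+1}^{2t} β (j-i)` tends to 0. -/
theorem stmt_2 (β : ℕ → ℝ) (hnonneg : ∀ k, 0 ≤ β k) (hmono : Antitone β)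
    (hsum : Summable (fun k : ℕ => (k : ℝ) * β k)) :
    Tendsto
      (fun t : ℕ =>
        (1 / (t : ℝ)) * ∑ i ∈ Finset.Icc 1 t, ∑ j ∈ Finset.Icc (t + 1) (2 * t), β (j - i))
      atTop (nhds 0) := by
  set C := ∑' k : ℕ, (k : ℝ) * β k with hC
  have hterm : ∀ k : ℕ, 0 ≤ (k : ℝ) * β k :=
    fun k => mul_nonneg (Nat.cast_nonneg k) (hnonneg k)
  have key : ∀ t : ℕ,
      ∑ i ∈ Finset.Icc 1 t, ∑ j ∈ Finset.Icc (t + 1) (2 * t), β (j - i) ≤ C := by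
    intro t
    have step1 : ∀ i ∈ Finset.Icc 1 t,
        ∑ j ∈ Finset.Icc (t + 1) (2 * t), β (j - i)
          ≤ ∑ k ∈ Finset.Icc (t + 1 - i) (2 * t), β k := by
      intro i hi
      simp only [Finset.mem_Icc] at hi
      have h1 : ∑ j ∈ Finset.Icc (t + 1) (2 * t), β (j - i)
          = ∑ k ∈ Finset.Icc (t + 1 - i) (2 * t - i), β k := by
        have hmap := Finset.map_add_left_Icc (t + 1 - i) (2 * t - i) i
        rw [show i + (t + 1 - i) = t + 1 by omega,
            show i + (2 * t - i) = 2 * t by omega] at hmap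
        rw [← hmap, Finset.sum_map]
        apply Finset.sum_congr rfl
        intro k _
        simp [addLeftEmbedding]
      rw [h1]
      apply Finset.sum_le_sum_of_subset_of_nonneg
      · exact Finset.Icc_subset_Icc_right (by omega)
      · intro k _ _; exact hnonneg k
    calc ∑ i ∈ Finset.Icc 1 t, ∑ j ∈ Finset.Icc (t + 1) (2 * t), β (j - i)
        ≤ ∑ i ∈ Finset.Icc 1 t, ∑ k ∈ Finset.Icc (t + 1 - i) (2 * t), β k :=
          Finset.sum_le_sum step1
      _ = ∑ k ∈ Finset.Icc 1 (2 * t), ∑ _i ∈ Finset.Icc (max 1 (t + 1 - k)) t, β k := by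
          apply Finset.sum_comm'
          intro i k
          simp only [Finset.mem_Icc]
          omega
      _ ≤ ∑ k ∈ Finset.Icc 1 (2 * t), (k : ℝ) * β k := by
          apply Finset.sum_le_sum
          intro k hk
          simp only [Finset.mem_Icc] at hk
          rw [Finset.sum_const, Nat.card_Icc, nsmul_eq_mul]
          apply mul_le_mul_of_nonneg_right _ (hnonneg k)
          exact_mod_cast (by omega : t + 1 - max 1 (t + 1 - k) ≤ k)
      _ ≤ C := Summable.sum_le_tsum _ (fun k _ => hterm k) hsum
  have hnn : ∀ t : ℕ,
      0 ≤ (1 / (t : ℝ)) * ∑ i ∈ Finset.Icc 1 t, ∑ j ∈ Finset.Icc (t + 1) (2 * t), β (j - i) :=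
    fun t => mul_nonneg (by positivity)
      (Finset.sum_nonneg fun i _ => Finset.sum_nonneg fun j _ => hnonneg _)
  have hub : ∀ t : ℕ,
      (1 / (t : ℝ)) * ∑ i ∈ Finset.Icc 1 t, ∑ j ∈ Finset.Icc (t + 1) (2 * t), β (j - i)
        ≤ C / t := by
    intro t
    rw [one_div, inv_mul_eq_div]
    gcongr
    exact key t
  exact squeeze_zero hnn hub (tendsto_const_div_atTop_nhds_zero_nat C)
end

section
/- Let X, Y be bounded real-valued random variables with |X| ≤ M and |Y| ≤ M almost surely. Then |Cov(X,Y)| ≤ 4 M² · β, where β is any number such that the total variation distance between the joint law of (X,Y) and the product of the marginal laws is at most β. -/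
open MeasureTheory

lemma integral_sub_le_tv {α : Type*} [MeasurableSpace α] (μ ν : Measure α)
    [IsFiniteMeasure μ] [IsFiniteMeasure ν] (f : α → ℝ) (hf : Measurable f)
    (C : ℝ) (hC : ∀ x, |f x| ≤ C) :
    |(∫ x, f x ∂μ) - ∫ x, f x ∂ν| ≤
      C * (((μ.toSignedMeasure - ν.toSignedMeasure).totalVariation) Set.univ).toReal := by
  set s := μ.toSignedMeasure - ν.toSignedMeasure with hs
  set p := s.toJordanDecomposition.posPart with hp
  set q := s.toJordanDecomposition.negPart with hq
  have hsp : p.toSignedMeasure - q.toSignedMeasure = s :=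
    s.toSignedMeasure_toJordanDecomposition
  have hadd : μ + q = ν + p := by
    rw [← Measure.toSignedMeasure_eq_toSignedMeasure_iff,
      Measure.toSignedMeasure_add, Measure.toSignedMeasure_add]
    have : μ.toSignedMeasure - ν.toSignedMeasure = p.toSignedMeasure - q.toSignedMeasure := by
      rw [hsp]
    linear_combination (norm := abel) this
  have hint : ∀ (ρ : Measure α) [IsFiniteMeasure ρ], Integrable f ρ := fun ρ _ =>
    ⟨hf.aestronglyMeasurable, HasFiniteIntegral.of_bounded (C := C)
      (ae_of_all _ fun x => (Real.norm_eq_abs _) ▸ hC x)⟩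
  have hsum : (∫ x, f x ∂μ) + ∫ x, f x ∂q = (∫ x, f x ∂ν) + ∫ x, f x ∂p := by
    rw [← integral_add_measure (hint μ) (hint q), ← integral_add_measure (hint ν) (hint p), hadd]
  have hdiff : (∫ x, f x ∂μ) - ∫ x, f x ∂ν = (∫ x, f x ∂p) - ∫ x, f x ∂q := by
    linarith
  have hbp : |∫ x, f x ∂p| ≤ C * (p Set.univ).toReal := by
    simpa [Real.norm_eq_abs, measureReal_def] using
      norm_integral_le_of_norm_le_const (μ := p) (f := f) (C := C)
        (ae_of_all _ fun x => (Real.norm_eq_abs _) ▸ hC x)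
  have hbq : |∫ x, f x ∂q| ≤ C * (q Set.univ).toReal := by
    simpa [Real.norm_eq_abs, measureReal_def] using
      norm_integral_le_of_norm_le_const (μ := q) (f := f) (C := C)
        (ae_of_all _ fun x => (Real.norm_eq_abs _) ▸ hC x)
  have htv : ((s.totalVariation) Set.univ).toReal
      = (p Set.univ).toReal + (q Set.univ).toReal := by
    rw [SignedMeasure.totalVariation, Measure.add_apply,
      ENNReal.toReal_add (measure_ne_top _ _) (measure_ne_top _ _)]
  rw [hdiff, htv, mul_add]
  calc |(∫ x, f x ∂p) - ∫ x, f x ∂q| ≤ |∫ x, f x ∂p| + |∫ x, f x ∂q| := abs_sub _ _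
    _ ≤ C * (p Set.univ).toReal + C * (q Set.univ).toReal := add_le_add hbp hbq

/-- Davydov-type covariance inequality for bounded random variables:
`|Cov(X,Y)| ≤ 4 M² β` whenever the total variation distance between the joint law of
`(X,Y)` and the product of the marginal laws is at most `β`. -/
theorem stmt_3 {Ω : Type*} [MeasurableSpace Ω] (P : Measure Ω) [IsProbabilityMeasure P]
    (X Y : Ω → ℝ) (hX : Measurable X) (hY : Measurable Y)
    (M : ℝ) (hXM : ∀ ω, |X ω| ≤ M) (hYM : ∀ ω, |Y ω| ≤ M)
    (β : ℝ)
    (hβ : ((((P.map (fun ω => (X ω, Y ω))).toSignedMeasure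
          - ((P.map X).prod (P.map Y)).toSignedMeasure).totalVariation) Set.univ).toReal ≤ β) :
    |(∫ ω, X ω * Y ω ∂P) - (∫ ω, X ω ∂P) * (∫ ω, Y ω ∂P)| ≤ 4 * M ^ 2 * β := by
  have hΩ : Nonempty Ω := by
    by_contra h
    rw [not_nonempty_iff] at h
    have := measure_univ (μ := P)
    simp [Set.univ_eq_empty_iff.2 h] at this
  obtain ⟨ω₀⟩ := hΩ
  have hM : 0 ≤ M := le_trans (abs_nonneg _) (hXM ω₀)
  -- clamp function
  set c : ℝ → ℝ := fun a => max (min a M) (-M) with hc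
  have hcmeas : Measurable c := (measurable_id.min measurable_const).max measurable_const
  have hcbd : ∀ a, |c a| ≤ M := fun a => by
    rw [abs_le]
    constructor
    · exact le_max_right _ _
    · exact max_le (min_le_right _ _) (by linarith)
  have hcfix : ∀ a, |a| ≤ M → c a = a := fun a ha => by
    rw [abs_le] at ha
    simp [hc, min_eq_left ha.2, max_eq_left ha.1]
  set g : ℝ × ℝ → ℝ := fun p => c p.1 * c p.2 with hg
  have hgmeas : Measurable g := (hcmeas.comp measurable_fst).mul (hcmeas.comp measurable_snd)
  have hgbd : ∀ p, |g p| ≤ M ^ 2 := fun p => by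
    rw [hg, abs_mul, sq]
    exact mul_le_mul (hcbd _) (hcbd _) (abs_nonneg _) hM
  have hXY : Measurable fun ω => (X ω, Y ω) := hX.prodMk hY
  have hjoint : IsProbabilityMeasure (P.map fun ω => (X ω, Y ω)) :=
    Measure.isProbabilityMeasure_map hXY.aemeasurable
  have hmapX : IsProbabilityMeasure (P.map X) := Measure.isProbabilityMeasure_map hX.aemeasurable
  have hmapY : IsProbabilityMeasure (P.map Y) := Measure.isProbabilityMeasure_map hY.aemeasurable
  have h1 : ∫ p, g p ∂(P.map fun ω => (X ω, Y ω)) = ∫ ω, X ω * Y ω ∂P := by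
    rw [integral_map hXY.aemeasurable hgmeas.aestronglyMeasurable]
    refine integral_congr_ae (ae_of_all _ fun ω => ?_)
    simp [hg, hcfix _ (hXM ω), hcfix _ (hYM ω)]
  have h2 : ∫ p, g p ∂((P.map X).prod (P.map Y)) = (∫ ω, X ω ∂P) * ∫ ω, Y ω ∂P := by
    rw [hg]
    rw [MeasureTheory.integral_prod_mul (f := c) (g := c)]
    have hcX : ∫ a, c a ∂(P.map X) = ∫ ω, X ω ∂P := by
      rw [integral_map hX.aemeasurable hcmeas.aestronglyMeasurable]
      exact integral_congr_ae (ae_of_all _ fun ω => hcfix _ (hXM ω))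
    have hcY : ∫ a, c a ∂(P.map Y) = ∫ ω, Y ω ∂P := by
      rw [integral_map hY.aemeasurable hcmeas.aestronglyMeasurable]
      exact integral_congr_ae (ae_of_all _ fun ω => hcfix _ (hYM ω))
    rw [hcX, hcY]
  have key := integral_sub_le_tv (P.map fun ω => (X ω, Y ω)) ((P.map X).prod (P.map Y))
    g hgmeas (M ^ 2) hgbd
  rw [h1, h2] at key
  have hβ0 : 0 ≤ β := le_trans ENNReal.toReal_nonneg hβ
  have hM2 : (0:ℝ) ≤ M ^ 2 := sq_nonneg M
  nlinarith [mul_le_mul_of_nonneg_left hβ hM2]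
end

section
/- Pointwise convergence of a sequence of affine functions on a compact convex subset of ℝᵈ to a continuous limit implies uniform convergence on that set. -/
open Filter

/-- The affine map `θ ↦ ∑ i, c i * θ i + e`. -/
noncomputable def affOf {d : ℕ} (c : Fin d → ℝ) (e : ℝ) : (Fin d → ℝ) →ᵃ[ℝ] ℝ where
  toFun θ := (∑ i, c i * θ i) + e
  linear :=
    { toFun := fun θ => ∑ i, c i * θ i
      map_add' := by intro x y; simp [mul_add, Finset.sum_add_distrib]
      map_smul' := by intro r x; simp [Finset.mul_sum, mul_left_comm] }
  map_vadd' := by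
    intro p v
    simp only [vadd_eq_add, Pi.add_apply, LinearMap.coe_mk, AddHom.coe_mk, mul_add,
      Finset.sum_add_distrib]
    ring

@[simp] lemma affOf_apply {d : ℕ} (c : Fin d → ℝ) (e : ℝ) (x : Fin d → ℝ) :
    affOf c e x = (∑ i, c i * x i) + e := rfl

/-- An affine map vanishing on a set vanishes on its affine span. -/
lemma affmap_zero_on_span {d : ℕ} (f : (Fin d → ℝ) →ᵃ[ℝ] ℝ) (t : Set (Fin d → ℝ))
    (h : ∀ x ∈ t, f x = 0) : ∀ x ∈ affineSpan ℝ t, f x = 0 := by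
  let Q : AffineSubspace ℝ (Fin d → ℝ) :=
    { carrier := {x | f x = 0}
      smul_vsub_vadd_mem' := by
        intro c p1 p2 p3 h1 h2 h3
        simp only [Set.mem_setOf_eq] at h1 h2 h3 ⊢
        have : f (c • (p1 -ᵥ p2) +ᵥ p3) = f.linear (c • (p1 -ᵥ p2)) +ᵥ f p3 :=
          f.map_vadd p3 (c • (p1 -ᵥ p2))
        rw [this, map_smul, AffineMap.linearMap_vsub, h1, h2, h3]
        simp }
  intro x hx
  have hle : affineSpan ℝ t ≤ Q := affineSpan_le.mpr h
  exact hle hx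

/-- Pointwise convergence of affine functions on a compact convex subset of ℝᵈ to a
continuous limit implies uniform convergence on that set. -/
theorem stmt_5 {d : ℕ} (Θ : Set (Fin d → ℝ)) (hcomp : IsCompact Θ) (hconv : Convex ℝ Θ)
    (a : ℕ → Fin d → ℝ) (b : ℕ → ℝ) (g : (Fin d → ℝ) → ℝ)
    (hg : ContinuousOn g Θ)
    (hpt : ∀ θ ∈ Θ,
      Tendsto (fun n => (∑ i, a n i * θ i) + b n) atTop (nhds (g θ))) :
    TendstoUniformlyOn (fun n θ => (∑ i, a n i * θ i) + b n) g atTop Θ := by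
  classical
  rcases Θ.eq_empty_or_nonempty with rfl | hne
  · exact tendstoUniformlyOn_empty
  obtain ⟨t, htΘ, hspan, hind⟩ := exists_affineIndependent ℝ (Fin d → ℝ) Θ
  obtain ⟨s, hts, hinds, hstot⟩ := exists_subset_affineIndependent_affineSpan_eq_top hind
  haveI : Finite ↥s := finite_of_fin_dim_affineIndependent ℝ hinds
  haveI : Fintype ↥s := Fintype.ofFinite _
  let B : AffineBasis ↥s ℝ (Fin d → ℝ) := ⟨(↑), hinds, by rw [Subtype.range_coe]; exact hstot⟩
  have hBcoe : ∀ i : ↥s, B i = (i : Fin d → ℝ) := fun i => rfl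
  -- coordinates of points of Θ supported on basis vectors lying in Θ
  have hvanish : ∀ (i : ↥s), (i : Fin d → ℝ) ∉ Θ → ∀ θ ∈ Θ, B.coord i θ = 0 := by
    intro i hi θ hθ
    have hz : ∀ x ∈ t, B.coord i x = 0 := by
      intro x hx
      have hxs : x ∈ s := hts hx
      have hij : i ≠ ⟨x, hxs⟩ := by
        intro h
        exact hi (h ▸ htΘ hx)
      have := B.coord_apply i ⟨x, hxs⟩
      rw [hBcoe] at this
      simpa [hij] using this
    have hθspan : θ ∈ affineSpan ℝ t := by
      rw [hspan]
      exact subset_affineSpan ℝ Θ hθ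
    exact affmap_zero_on_span (B.coord i) t hz θ hθspan
  -- representation of affine maps via barycentric coordinates
  have hrep : ∀ (f : (Fin d → ℝ) →ᵃ[ℝ] ℝ) (θ : Fin d → ℝ),
      f θ = ∑ j : ↥s, B.coord j θ * f (B j) := by
    intro f θ
    conv_lhs => rw [← B.affineCombination_coord_eq_self θ]
    rw [Finset.univ.map_affineCombination B _ (B.sum_coord_apply_eq_one θ) f,
      Finset.univ.affineCombination_eq_linear_combination _ _ (B.sum_coord_apply_eq_one θ)]
    simp [smul_eq_mul]
  have haff : ∀ (n : ℕ) (θ : Fin d → ℝ),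
      (∑ i, a n i * θ i) + b n
        = ∑ j : ↥s, B.coord j θ * ((∑ i, a n i * (j : Fin d → ℝ) i) + b n) := by
    intro n θ
    simpa [hBcoe] using hrep (affOf (a n) (b n)) θ
  -- limit values at basis points
  set G : ↥s → ℝ := fun j => if (j : Fin d → ℝ) ∈ Θ then g (j : Fin d → ℝ) else 0 with hG
  have hgrep : ∀ θ ∈ Θ, g θ = ∑ j : ↥s, B.coord j θ * G j := by
    intro θ hθ
    refine tendsto_nhds_unique (hpt θ hθ) ?_
    rw [tendsto_congr (fun n => haff n θ)]
    apply tendsto_finset_sum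
    intro j _
    by_cases hj : (j : Fin d → ℝ) ∈ Θ
    · have h1 := (hpt _ hj).const_mul (B.coord j θ)
      simpa [hG, hj] using h1
    · simp only [hvanish j hj θ hθ, zero_mul]
      exact tendsto_const_nhds
  -- uniform bound on coordinates
  have hcont : ContinuousOn (fun θ => ∑ j : ↥s, |B.coord j θ|) Θ := by
    apply Continuous.continuousOn
    exact continuous_finset_sum _ fun j _ => (continuous_barycentric_coord B j).abs
  obtain ⟨M, hM⟩ := hcomp.exists_bound_of_continuousOn hcont
  -- error terms
  set e : ℕ → ↥s → ℝ := fun n j =>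
    if (j : Fin d → ℝ) ∈ Θ then |((∑ i, a n i * (j : Fin d → ℝ) i) + b n) - G j| else 0 with he
  have he_nonneg : ∀ n j, 0 ≤ e n j := by
    intro n j
    by_cases hj : (j : Fin d → ℝ) ∈ Θ <;> simp [he, hj, abs_nonneg]
  set E : ℕ → ℝ := fun n => ∑ j : ↥s, e n j with hE
  have hE_nonneg : ∀ n, 0 ≤ E n := fun n => Finset.sum_nonneg fun j _ => he_nonneg n j
  have hE_lim : Tendsto E atTop (nhds 0) := by
    have : Tendsto E atTop (nhds (∑ j : ↥s, (0 : ℝ))) := by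
      apply tendsto_finset_sum
      intro j _
      by_cases hj : (j : Fin d → ℝ) ∈ Θ
      · have h1 : Tendsto (fun n => ((∑ i, a n i * (j : Fin d → ℝ) i) + b n) - G j)
            atTop (nhds 0) := by
          have := (hpt _ hj).sub_const (G j)
          simpa [hG, hj] using this
        have h2 := h1.abs
        simp only [abs_zero] at h2
        simpa [he, hj] using h2
      · simp only [hE, he, hj, if_false]
        exact tendsto_const_nhds
    simpa using this
  -- conclusion
  rw [Metric.tendstoUniformlyOn_iff]
  intro ε hε
  have hMul : Tendsto (fun n => M * E n) atTop (nhds 0) := by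
    simpa using hE_lim.const_mul M
  filter_upwards [hMul.eventually_lt_const hε] with n hn θ hθ
  rw [Real.dist_eq]
  have hbound : |g θ - ((∑ i, a n i * θ i) + b n)| ≤ M * E n := by
    have hdiff : g θ - ((∑ i, a n i * θ i) + b n)
        = ∑ j : ↥s, B.coord j θ * (G j - ((∑ i, a n i * (j : Fin d → ℝ) i) + b n)) := by
      rw [hgrep θ hθ, haff n θ, ← Finset.sum_sub_distrib]
      simp [mul_sub]
    calc |g θ - ((∑ i, a n i * θ i) + b n)|
        = |∑ j : ↥s, B.coord j θ * (G j - ((∑ i, a n i * (j : Fin d → ℝ) i) + b n))| := by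
          rw [hdiff]
      _ ≤ ∑ j : ↥s, |B.coord j θ * (G j - ((∑ i, a n i * (j : Fin d → ℝ) i) + b n))| :=
          Finset.abs_sum_le_sum_abs _ _
      _ = ∑ j : ↥s, |B.coord j θ| * |G j - ((∑ i, a n i * (j : Fin d → ℝ) i) + b n)| := by
          simp [abs_mul]
      _ ≤ ∑ j : ↥s, |B.coord j θ| * E n := by
          apply Finset.sum_le_sum
          intro j _
          by_cases hj : (j : Fin d → ℝ) ∈ Θ
          · have h1 : |G j - ((∑ i, a n i * (j : Fin d → ℝ) i) + b n)| = e n j := by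
              rw [abs_sub_comm]; simp [he, hj]
            rw [h1]
            exact mul_le_mul_of_nonneg_left
              (Finset.single_le_sum (fun k _ => he_nonneg n k) (Finset.mem_univ j))
              (abs_nonneg _)
          · rw [hvanish j hj θ hθ]
            simp
      _ = (∑ j : ↥s, |B.coord j θ|) * E n := by rw [Finset.sum_mul]
      _ ≤ M * E n := by
          apply mul_le_mul_of_nonneg_right _ (hE_nonneg n)
          exact le_trans (le_abs_self _) (hM θ hθ)
  exact lt_of_le_of_lt hbound hn
end

section
/- If f : [a₁,b₁] × ⋯ × [a_d,b_d] → ℝ is continuously differentiable with all mixed partial derivatives up to order d bounded by K, then f has finite variation in the sense of Vitali on the hyperrectangle, bounded by K·∏ᵢ(bᵢ − aᵢ). -/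
open Finset

/-- The `d`-fold alternating sum `Δ(f; x, z) = ∑_{v ⊆ {1,…,d}} (-1)^{|v|} f(x^v : z^{-v})`. -/
def altSum (d : ℕ) (f : (Fin d → ℝ) → ℝ) (x z : Fin d → ℝ) : ℝ :=
  ∑ v : Finset (Fin d), (-1 : ℝ) ^ v.card * f (fun i => if i ∈ v then x i else z i)

/-- Alternating sum over subsets of `s` only; outside `s` the points take `z`-values. -/
def partAltSum (d : ℕ) (s : Finset (Fin d)) (g : (Fin d → ℝ) → ℝ) (x z : Fin d → ℝ) : ℝ :=
  ∑ v ∈ s.powerset, (-1 : ℝ) ^ v.card * g (fun i => if i ∈ v then x i else z i)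

lemma key (d : ℕ) (s : Finset (Fin d)) :
    ∀ (g : (Fin d → ℝ) → ℝ) (K : ℝ), ContDiff ℝ s.card g →
      (∀ w, ‖iteratedFDeriv ℝ s.card g w‖ ≤ K) →
      ∀ x z : Fin d → ℝ, (∀ i, x i ≤ z i) →
      |partAltSum d s g x z| ≤ K * ∏ i ∈ s, (z i - x i) := by
  induction s using Finset.induction_on with
  | empty =>
    intro g K hg hbd x z hxz
    simp only [partAltSum, Finset.powerset_empty, Finset.sum_singleton, Finset.card_empty,
      pow_zero, one_mul, Finset.notMem_empty, if_false, Finset.prod_empty, mul_one]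
    have := hbd z
    change ‖iteratedFDeriv ℝ 0 g z‖ ≤ K at this
    rw [norm_iteratedFDeriv_zero, Real.norm_eq_abs] at this
    exact this
  | @insert j s hj IH =>
    intro g K hg hbd x z hxz
    have hK : 0 ≤ K := le_trans (norm_nonneg _) (hbd x)
    have hcard : (insert j s).card = s.card + 1 := Finset.card_insert_of_notMem hj
    rw [hcard] at hg hbd
    have hg' : ContDiff ℝ ((s.card : WithTop ℕ∞) + 1) g := by
      exact_mod_cast hg
    have hgdiff : Differentiable ℝ g :=
      hg'.differentiable (by simp)
    -- the directional derivative in direction j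
    set h : (Fin d → ℝ) → ℝ := fun w => fderiv ℝ g w (Pi.single j 1) with hh
    have hh_cd : ContDiff ℝ s.card h :=
      (hg'.fderiv_right le_rfl).clm_apply contDiff_const
    have hh_bd : ∀ w, ‖iteratedFDeriv ℝ s.card h w‖ ≤ K := by
      intro w
      have h1 : ‖iteratedFDeriv ℝ s.card h w‖ ≤
          ‖(Pi.single j 1 : Fin d → ℝ)‖ * ‖iteratedFDeriv ℝ s.card (fderiv ℝ g) w‖ :=
        norm_iteratedFDeriv_clm_apply_const (hg'.fderiv_right le_rfl).contDiffAt le_rfl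
      rw [Pi.norm_single, norm_one, one_mul, norm_iteratedFDeriv_fderiv] at h1
      exact h1.trans (hbd w)
    -- derivative along the j-th coordinate line
    have lineD : ∀ (p : Fin d → ℝ) (t : ℝ),
        HasDerivAt (fun t => g (Function.update p j t)) (h (Function.update p j t)) t := by
      intro p t
      have hu : HasDerivAt (fun t => Function.update p j t) (Pi.single j 1) t := by
        rw [hasDerivAt_pi]
        intro i
        by_cases hij : i = j
        · subst hij
          simp only [Function.update_self, Pi.single_eq_same]
          exact hasDerivAt_id t
        · simp only [Function.update_of_ne hij, Pi.single_eq_of_ne hij]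
          exact hasDerivAt_const t _
      exact (hgdiff _).hasFDerivAt.comp_hasDerivAt t hu
    have hcont : ∀ p : Fin d → ℝ, Continuous fun t => h (Function.update p j t) :=
      fun p => hh_cd.continuous.comp (continuous_const.update j continuous_id)
    have ftc : ∀ p : Fin d → ℝ,
        g (Function.update p j (z j)) - g (Function.update p j (x j)) =
          ∫ t in (x j)..(z j), h (Function.update p j t) := by
      intro p
      exact (intervalIntegral.integral_eq_sub_of_hasDerivAt (fun t _ => lineD p t)
        ((hcont p).intervalIntegrable _ _)).symm
    -- rewrite the alternating sum as an integral
    have step : partAltSum d (insert j s) g x z =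
        ∫ t in (x j)..(z j), partAltSum d s h x (Function.update z j t) := by
      rw [partAltSum, Finset.powerset_insert, Finset.sum_union, Finset.sum_image]
      · have : ∀ v ∈ s.powerset,
            (-1 : ℝ) ^ v.card * g (fun i => if i ∈ v then x i else z i) +
            (-1 : ℝ) ^ (insert j v).card *
              g (fun i => if i ∈ insert j v then x i else z i) =
            (-1 : ℝ) ^ v.card *
              ∫ t in (x j)..(z j), h (Function.update
                (fun i => if i ∈ v then x i else z i) j t) := by
          intro v hv
          rw [Finset.mem_powerset] at hv
          have hjv : j ∉ v := fun hmem => hj (hv hmem)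
          have hc : (insert j v).card = v.card + 1 := Finset.card_insert_of_notMem hjv
          have e0 : Function.update (fun i => if i ∈ v then x i else z i) j (z j) =
              (fun i => if i ∈ v then x i else z i) := by
            funext i
            by_cases hij : i = j
            · subst hij; simp [hjv]
            · simp [Function.update_of_ne hij]
          have e2 : (fun i => if i ∈ insert j v then x i else z i) =
              Function.update (fun i => if i ∈ v then x i else z i) j (x j) := by
            funext i
            by_cases hij : i = j
            · subst hij; simp [Finset.mem_insert]
            · simp [Function.update_of_ne hij, Finset.mem_insert, hij]
          have hftc := ftc (fun i => if i ∈ v then x i else z i)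
          rw [e0] at hftc
          rw [e2, hc, pow_succ]
          linear_combination ((-1 : ℝ) ^ v.card) * hftc
        rw [← Finset.sum_add_distrib, Finset.sum_congr rfl this]
        simp_rw [← intervalIntegral.integral_const_mul]
        rw [← intervalIntegral.integral_finset_sum]
        · congr 1
          funext t
          rw [partAltSum]
          refine Finset.sum_congr rfl fun v hv => ?_
          rw [Finset.mem_powerset] at hv
          have hjv : j ∉ v := fun hmem => hj (hv hmem)
          congr 1
          congr 1
          funext i
          by_cases hij : i = j
          · subst hij; simp [Function.update_self, hjv]
          · simp [Function.update_of_ne hij, hij]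
        · intro v hv
          exact (continuous_const.mul (hcont _)).intervalIntegrable _ _
      · intro v₁ hv₁ v₂ hv₂ hins
        rw [Finset.mem_coe, Finset.mem_powerset] at hv₁ hv₂
        have h1 : j ∉ v₁ := fun hmem => hj (hv₁ hmem)
        have h2 : j ∉ v₂ := fun hmem => hj (hv₂ hmem)
        rw [← Finset.erase_insert h1, ← Finset.erase_insert h2, hins]
      · rw [Finset.disjoint_right]
        intro v hvim hvpow
        rw [Finset.mem_image] at hvim
        obtain ⟨w, _, rfl⟩ := hvim
        rw [Finset.mem_powerset] at hvpow
        exact hj (hvpow (Finset.mem_insert_self j w))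
    -- the bound
    rw [step, ← Real.norm_eq_abs]
    have hbnd : ∀ t ∈ Set.uIoc (x j) (z j),
        ‖partAltSum d s h x (Function.update z j t)‖ ≤ K * ∏ i ∈ s, (z i - x i) := by
      intro t ht
      rw [Set.uIoc_of_le (hxz j)] at ht
      have hxz' : ∀ i, x i ≤ Function.update z j t i := by
        intro i
        by_cases hij : i = j
        · subst hij; rw [Function.update_self]; exact ht.1.le
        · rw [Function.update_of_ne hij]; exact hxz i
      have := IH h K hh_cd hh_bd x (Function.update z j t) hxz'
      rw [Real.norm_eq_abs]
      refine this.trans (le_of_eq ?_)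
      congr 1
      refine Finset.prod_congr rfl fun i hi => ?_
      have hij : i ≠ j := fun he => hj (he ▸ hi)
      rw [Function.update_of_ne hij]
    have := intervalIntegral.norm_integral_le_of_norm_le_const hbnd
    refine this.trans (le_of_eq ?_)
    rw [Finset.prod_insert hj, abs_of_nonneg (sub_nonneg.2 (hxz j))]
    ring

lemma telescope (N : ℕ) (Y : Fin (N + 1) → ℝ) :
    ∑ m : Fin N, (Y m.succ - Y m.castSucc) = Y (Fin.last N) - Y 0 := by
  have hle : ∀ m : ℕ, min m N < N + 1 := fun m => Nat.lt_succ_of_le (Nat.min_le_right _ _)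
  set F : ℕ → ℝ := fun m => Y ⟨min m N, hle m⟩ with hF
  have h1 : ∑ m : Fin N, (Y m.succ - Y m.castSucc) = ∑ m ∈ Finset.range N, (F (m + 1) - F m) := by
    rw [Finset.sum_range fun m => F (m + 1) - F m]
    refine Finset.sum_congr rfl fun m _ => ?_
    have e1 : F ((m : ℕ) + 1) = Y m.succ := by
      simp only [hF]
      congr 1
      exact Fin.ext (by simp [Nat.min_eq_left (Nat.succ_le_of_lt m.isLt)])
    have e2 : F (m : ℕ) = Y m.castSucc := by
      simp only [hF]
      congr 1
      exact Fin.ext (by simp [Nat.min_eq_left m.isLt.le])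
    rw [e1, e2]
  rw [h1, Finset.sum_range_sub]
  have e3 : F N = Y (Fin.last N) := by
    simp only [hF]; congr 1; exact Fin.ext (by simp [Fin.last])
  have e4 : F 0 = Y 0 := by
    simp only [hF]; congr 1
  rw [e3, e4]

/-- If `f` is `C^d` on `ℝᵈ` with all iterated derivatives of order up to `d` bounded
by `K`, then `f` has Vitali variation on the hyperrectangle `[a,b]` at most
`K ∏ᵢ (bᵢ - aᵢ)`: every grid sum of absolute alternating sums obeys this bound. -/
theorem stmt_12 (d : ℕ) (a b : Fin d → ℝ) (hab : ∀ i, a i ≤ b i) (K : ℝ)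
    (f : (Fin d → ℝ) → ℝ) (hf : ContDiff ℝ d f)
    (hbound : ∀ (x : Fin d → ℝ) (n : ℕ), n ≤ d → ‖iteratedFDeriv ℝ n f x‖ ≤ K) :
    ∀ (n : Fin d → ℕ) (y : ∀ i, Fin (n i + 1) → ℝ),
      (∀ i, Monotone (y i)) → (∀ i, y i 0 = a i) → (∀ i, y i (Fin.last (n i)) = b i) →
      ∑ k : (∀ i, Fin (n i)),
          |altSum d f (fun i => y i (k i).castSucc) (fun i => y i (k i).succ)|
        ≤ K * ∏ i, (b i - a i) := by
  intro n y hmono hy0 hylast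
  have hcard : (Finset.univ : Finset (Fin d)).card = d := by simp
  have cell : ∀ k : (∀ i, Fin (n i)),
      |altSum d f (fun i => y i (k i).castSucc) (fun i => y i (k i).succ)|
        ≤ K * ∏ i, (y i (k i).succ - y i (k i).castSucc) := by
    intro k
    have h1 : altSum d f (fun i => y i (k i).castSucc) (fun i => y i (k i).succ) =
        partAltSum d Finset.univ f (fun i => y i (k i).castSucc)
          (fun i => y i (k i).succ) := by
      rw [altSum, partAltSum, Finset.powerset_univ]
    rw [h1]
    exact key d Finset.univ f K (by rw [hcard]; exact hf)
      (fun w => by rw [hcard]; exact hbound w d le_rfl)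
      (fun i => y i (k i).castSucc) (fun i => y i (k i).succ)
      (fun i => hmono i (Fin.castSucc_le_succ _))
  refine (Finset.sum_le_sum fun k _ => cell k).trans ?_
  rw [← Finset.mul_sum]
  have hswap : ∑ k : (∀ i, Fin (n i)), ∏ i, (y i (k i).succ - y i (k i).castSucc) =
      ∏ i, ∑ m : Fin (n i), (y i m.succ - y i m.castSucc) := by
    rw [Finset.prod_univ_sum, Fintype.piFinset_univ]
  rw [hswap]
  refine le_of_eq ?_
  congr 1
  exact Finset.prod_congr rfl fun i _ => by rw [telescope, hylast, hy0]
end
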